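/- A ring R is a left PSD ring for an ideal I if and only if every finitely generated projective left R-module is PSD for I. -/

import Mathlib

open Submodule Function LinearMap

universe u v w x y

section Defs

variable (R : Type u) [Ring R]

/-- `I` (a left ideal) is a two-sided ideal. -/
def IsTwoSidedI (I : Ideal R) : Prop := ∀ a b : R, a ∈ I → a * b ∈ I

variable {M : Type v} [AddCommGroup M] [Module R M]

/-- `N` is PSD in the submodule `T` of `M` (taking `T = ⊤` gives "PSD in `M`"):
whenever `N + X = T`, there is a projective direct summand `S` of `T` with `S ≤ N`
and `T = S ⊕ X`. -/
def PSDIn (T N : Submodule R M) : Prop :=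
  ∀ X : Submodule R M, X ≤ T → N ⊔ X = T →
    ∃ S : Submodule R M, Module.Projective R S ∧ S ≤ N ∧ S ⊔ X = T ∧ S ⊓ X = ⊥

/-- `M` is PSD for the ideal `I`: every submodule of `IM` is PSD in `M`. -/
def PSDFor (I : Ideal R) (M : Type v) [AddCommGroup M] [Module R M] : Prop :=
  ∀ N : Submodule R M, N ≤ I • (⊤ : Submodule R M) → PSDIn R ⊤ N

/-- `R` is a left PSD ring for `I`: every finitely generated free left `R`-module is PSD for `I`. -/
def PSDRing (I : Ideal R) : Prop :=
  ∀ (F : Type u) [AddCommGroup F] [Module R F] [Module.Free R F] [Module.Finite R F],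
    PSDFor R I F

/-- `f : P → M` is a projective `I`-cover. -/
def IsProjICover (I : Ideal R) {P : Type w} [AddCommGroup P] [Module R P]
    (f : P →ₗ[R] M) : Prop :=
  Surjective f ∧ Module.Projective R P ∧
    LinearMap.ker f ≤ I • (⊤ : Submodule R P) ∧ PSDIn R ⊤ (LinearMap.ker f)

/-- A projective `I`-cover of `M`. -/
structure ProjICover (I : Ideal R) (M : Type v) [AddCommGroup M] [Module R M] where
  P : Type w
  [addP : AddCommGroup P]
  [modP : Module R P]
  f : P →ₗ[R] M
  cover : IsProjICover R I f

/-- `R` is `I`-semiregular. -/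
def ISemiregular (I : Ideal R) : Prop :=
  ∀ a : R, ∃ P Q : Submodule R R, IsCompl P Q ∧ Module.Projective R P ∧
    P ≤ Submodule.span R {a} ∧ Submodule.span R {a} ⊓ Q ≤ I

/-- `R` is `I`-semiperfect. -/
def ISemiperfect (I : Ideal R) : Prop :=
  ∀ K : Submodule R R, ∃ A B : Submodule R R, IsCompl A B ∧ Module.Projective R A ∧
    A ≤ K ∧ K ⊓ B ≤ I

end Defs




section Defs2

variable (R : Type u) [Ring R]
variable {M : Type v} [AddCommGroup M] [Module R M]

/-- A submodule `S` is small in the submodule `T` (take `T = ⊤` for "small in `M`"). -/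
def SmallIn (T S : Submodule R M) : Prop :=
  ∀ X : Submodule R M, X ≤ T → S ⊔ X = T → X = T

/-- `K` is DM in the submodule `T` of `M`: whenever `K + X = T` there is a direct
summand `S` of `T` with `S ≤ K` and `S + X = T`. -/
def DMIn (T K : Submodule R M) : Prop :=
  ∀ X : Submodule R M, X ≤ T → K ⊔ X = T →
    ∃ S : Submodule R M, S ≤ K ∧ (∃ S' : Submodule R M, S ⊔ S' = T ∧ S ⊓ S' = ⊥) ∧ S ⊔ X = T

/-- `M` is DM for `I`: every submodule of `IM` is DM in `M`. -/
def DMFor (I : Ideal R) (M : Type v) [AddCommGroup M] [Module R M] : Prop :=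
  ∀ K : Submodule R M, K ≤ I • (⊤ : Submodule R M) → DMIn R ⊤ K

/-- `R` is a left DM ring for `I`. -/
def DMRing (I : Ideal R) : Prop :=
  ∀ (F : Type u) [AddCommGroup F] [Module R F] [Module.Free R F] [Module.Finite R F],
    DMFor R I F

/-- `M` is an `I`-supplemented module. -/
def ISupplemented (I : Ideal R) (M : Type v) [AddCommGroup M] [Module R M] : Prop :=
  ∀ X : Submodule R M, ∃ Y : Submodule R M, Module.Projective R Y ∧ X ⊔ Y = ⊤ ∧
    X ⊓ Y ≤ I • Y ∧ DMIn R Y (X ⊓ Y)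

/-- `M` is a finitely `I`-supplemented module. -/
def FinISupplemented (I : Ideal R) (M : Type v) [AddCommGroup M] [Module R M] : Prop :=
  ∀ X : Submodule R M, X.FG → ∃ Y : Submodule R M, Module.Projective R Y ∧ X ⊔ Y = ⊤ ∧
    X ⊓ Y ≤ I • Y ∧ DMIn R Y (X ⊓ Y)

/-- `M` is a supplemented module. -/
def Supplemented (M : Type v) [AddCommGroup M] [Module R M] : Prop :=
  ∀ X : Submodule R M, ∃ Y : Submodule R M, X ⊔ Y = ⊤ ∧ SmallIn R Y (X ⊓ Y)

/-- `M` is an `I`-semiperfect module. -/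
def ISemiperfectMod (I : Ideal R) (M : Type v) [AddCommGroup M] [Module R M] : Prop :=
  ∀ K : Submodule R M, ∃ A B : Submodule R M, IsCompl A B ∧ Module.Projective R A ∧
    A ≤ K ∧ K ⊓ B ≤ I • (⊤ : Submodule R M)

/-- The radical of `M`: the intersection of all maximal submodules. -/
def RadM (M : Type v) [AddCommGroup M] [Module R M] : Submodule R M :=
  sInf {N : Submodule R M | IsCoatom N}

/-- The socle of `M`: the sum of all simple submodules. -/
def SocM (M : Type v) [AddCommGroup M] [Module R M] : Submodule R M :=
  sSup {N : Submodule R M | IsSimpleModule R N}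

/-- `P` is locally projective (lifting version). -/
def LocallyProjective (P : Type w) [AddCommGroup P] [Module R P] : Prop :=
  ∀ (A : Type x) (B : Type y) [AddCommGroup A] [Module R A] [AddCommGroup B] [Module R B]
    (g : A →ₗ[R] B) (f : P →ₗ[R] B), Surjective g →
      ∀ P₀ : Submodule R P, P₀.FG → ∃ h : P →ₗ[R] A, ∀ p ∈ P₀, f p = g (h p)

/-- `P` is locally projective (splitting version). -/
def LocallyProjectiveB (P : Type w) [AddCommGroup P] [Module R P] : Prop :=
  ∀ (N : Type x) [AddCommGroup N] [Module R N] (g : N →ₗ[R] P), Surjective g →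
    ∀ P₀ : Submodule R P, P₀.FG → ∃ h : P →ₗ[R] N, ∀ p ∈ P₀, g (h p) = p


/-- A locally projective `I`-cover of `M`. -/
structure LocProjICover (I : Ideal R) (M : Type v) [AddCommGroup M] [Module R M] where
  P : Type w
  [addP : AddCommGroup P]
  [modP : Module R P]
  f : P →ₗ[R] M
  surj : Surjective f
  locProj : LocallyProjective.{u, w, x, y} R P
  ker_le : LinearMap.ker f ≤ I • (⊤ : Submodule R P)
  psd : PSDIn R ⊤ (LinearMap.ker f)

/-- A locally projective cover of `M`. -/
structure LocProjCover (M : Type v) [AddCommGroup M] [Module R M] where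
  P : Type w
  [addP : AddCommGroup P]
  [modP : Module R P]
  f : P →ₗ[R] M
  surj : Surjective f
  locProj : LocallyProjective.{u, w, x, y} R P
  ker_small : SmallIn R ⊤ (LinearMap.ker f)

/-- A projective cover of `M`. -/
structure ProjCover (M : Type v) [AddCommGroup M] [Module R M] where
  P : Type w
  [addP : AddCommGroup P]
  [modP : Module R P]
  f : P →ₗ[R] M
  surj : Surjective f
  proj : Module.Projective R P
  ker_small : SmallIn R ⊤ (LinearMap.ker f)

/-- `M` is self-projective (quasi-projective). -/
def SelfProjective (M : Type v) [AddCommGroup M] [Module R M] : Prop :=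
  ∀ (K : Submodule R M) (f : M →ₗ[R] M ⧸ K), ∃ h : M →ₗ[R] M, K.mkQ ∘ₗ h = f

/-- A projectivity class of `R`-modules (in a fixed universe). -/
def ProjectivityClass
    (Pc : ∀ (N : Type w) [AddCommGroup N] [Module R N], Prop) : Prop :=
  (∀ (N : Type w) [AddCommGroup N] [Module R N], SelfProjective R N → Pc N) ∧
  (∀ (N P : Type w) [AddCommGroup N] [Module R N] [AddCommGroup P] [Module R P]
      (f : P →ₗ[R] N), Surjective f → Module.Projective R P → Pc (P × N) →
        Module.Projective R N)

/-- `Pc` is closed under direct summands. -/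
def ClosedUnderSummands
    (Pc : ∀ (N : Type w) [AddCommGroup N] [Module R N], Prop) : Prop :=
  ∀ (N P : Type w) [AddCommGroup N] [Module R N] [AddCommGroup P] [Module R P],
    Pc P → ∀ (i : N →ₗ[R] P) (p : P →ₗ[R] N), p ∘ₗ i = LinearMap.id → Pc N

/-- A `Pc`-projective `I`-cover of `M`. -/
structure PProjICover (Pc : ∀ (N : Type w) [AddCommGroup N] [Module R N], Prop)
    (I : Ideal R) (M : Type v) [AddCommGroup M] [Module R M] where
  Q : Type w
  [addQ : AddCommGroup Q]
  [modQ : Module R Q]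
  g : Q →ₗ[R] M
  surj : Surjective g
  memP : Pc Q
  ker_le : LinearMap.ker g ≤ I • (⊤ : Submodule R Q)
  psd : PSDIn R ⊤ (LinearMap.ker g)

end Defs2


section Aux

variable {R : Type u} [Ring R]

lemma psdFor_of_split (I : Ideal R) {F : Type v} {P : Type w}
    [AddCommGroup F] [Module R F] [AddCommGroup P] [Module R P]
    (f : F →ₗ[R] P) (s : P →ₗ[R] F) (hfs : f ∘ₗ s = LinearMap.id)
    (hF : PSDFor R I F) : PSDFor R I P := by
  have hfs' : ∀ p, f (s p) = p := fun p => LinearMap.congr_fun hfs p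
  intro N hN X _ hNX
  set N' : Submodule R F := N.map s with hN'def
  set X' : Submodule R F := X.map s ⊔ LinearMap.ker f with hX'def
  have hN' : N' ≤ I • (⊤ : Submodule R F) := by
    calc N' ≤ (I • (⊤ : Submodule R P)).map s := Submodule.map_mono hN
    _ = I • ((⊤ : Submodule R P).map s) := Submodule.map_smul'' I ⊤ s
    _ ≤ I • (⊤ : Submodule R F) := Submodule.smul_mono le_rfl le_top
  have hsup : N' ⊔ X' = ⊤ := by
    rw [eq_top_iff]
    intro x _
    have h1 : s (f x) ∈ N' ⊔ X.map s := by
      rw [← Submodule.map_sup, hNX]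
      exact Submodule.mem_map_of_mem trivial
    have h2 : x - s (f x) ∈ LinearMap.ker f := by
      simp [LinearMap.mem_ker, hfs']
    have : x = (s (f x)) + (x - s (f x)) := by abel
    rw [hX'def, ← sup_assoc, this]
    exact Submodule.add_mem_sup h1 h2
  obtain ⟨S', hS'proj, hS'le, hS'sup, hS'inf⟩ := hF N' hN' X' le_top hsup
  set S : Submodule R P := S'.map f with hSdef
  have hker_le : LinearMap.ker f ≤ X' := le_sup_right
  have hinj : ∀ x ∈ S', f x = 0 → x = 0 := by
    intro x hx hfx
    have : x ∈ S' ⊓ X' := ⟨hx, hker_le hfx⟩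
    rwa [hS'inf, Submodule.mem_bot] at this
  refine ⟨S, ?_, ?_, ?_, ?_⟩
  · -- projective
    let g : S' →ₗ[R] S :=
      LinearMap.codRestrict S (f.domRestrict S') (fun x => Submodule.mem_map_of_mem x.2)
    have hg : Bijective g := by
      constructor
      · intro a b hab
        have : f (a - b : F) = 0 := by
          have := congrArg (Subtype.val) hab
          simp only [g, LinearMap.codRestrict_apply, LinearMap.domRestrict_apply] at this
          rw [map_sub]; exact sub_eq_zero.mpr this
        have := hinj _ (Submodule.sub_mem S' a.2 b.2) this
        exact Subtype.ext (by rwa [sub_eq_zero] at this)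
      · rintro ⟨y, hy⟩
        obtain ⟨x, hx, rfl⟩ := hy
        exact ⟨⟨x, hx⟩, rfl⟩
    haveI := hS'proj
    exact Module.Projective.of_equiv (LinearEquiv.ofBijective g hg)
  · -- S ≤ N
    calc S ≤ (N.map s).map f := Submodule.map_mono hS'le
    _ = N.map (f ∘ₗ s) := (Submodule.map_comp s f N).symm
    _ = N := by rw [hfs]; exact Submodule.map_id N
  · -- S ⊔ X = ⊤
    have hXmap : X'.map f = X := by
      rw [hX'def, Submodule.map_sup]
      have h1 : (X.map s).map f = X := by
        rw [← Submodule.map_comp, hfs, Submodule.map_id]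
      have h2 : (LinearMap.ker f).map f = ⊥ := by
        rw [Submodule.eq_bot_iff]
        rintro y ⟨x, hx, rfl⟩
        exact hx
      rw [h1, h2, sup_bot_eq]
    have : (S' ⊔ X').map f = (⊤ : Submodule R F).map f := by rw [hS'sup]
    rw [Submodule.map_sup, hXmap] at this
    rw [hSdef, this, Submodule.map_top, LinearMap.range_eq_top]
    intro p; exact ⟨s p, hfs' p⟩
  · -- S ⊓ X = ⊥
    rw [Submodule.eq_bot_iff]
    rintro p ⟨hpS, hpX⟩
    obtain ⟨x, hxS', rfl⟩ := hpS
    have h1 : s (f x) ∈ X' := Submodule.mem_sup_left (Submodule.mem_map_of_mem hpX)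
    have h2 : s (f x) - x ∈ X' := hker_le (by simp [LinearMap.mem_ker, map_sub, hfs'])
    have hx : x ∈ S' ⊓ X' := ⟨hxS', by
      have : x = s (f x) - (s (f x) - x) := by abel
      rw [this]; exact Submodule.sub_mem X' h1 h2⟩
    rw [hS'inf, Submodule.mem_bot] at hx
    rw [hx, map_zero]

end Aux

theorem stmt2 {R : Type u} [Ring R] (I : Ideal R) (hI : IsTwoSidedI R I) :
    PSDRing R I ↔
      ∀ (P : Type u) [AddCommGroup P] [Module R P] [Module.Finite R P]
        [Module.Projective R P], PSDFor R I P := by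
  constructor
  · intro h P _ _ _ _
    obtain ⟨n, f, hf⟩ := Module.Finite.exists_fin' R P
    obtain ⟨s, hs⟩ := Module.projective_lifting_property f LinearMap.id hf
    exact psdFor_of_split I f s hs (h (Fin n → R))
  · intro h F _ _ _ _
    exact h F
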